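/- For z in the open unit disk, Li₂(z) + Li₂(1-z) is well-defined when also 1-z is in the domain ℂ\[1,∞), and d/dz [Li₂(z) + Li₂(1-z) + log(z)log(1-z)] = 0 on the intersection of domains with z ∈ ℂ \ ((-∞,0] ∪ [1,∞)); hence Li₂(z) + Li₂(1-z) + log(z)log(1-z) = π²/6 there. -/

import Mathlib

open Complex Filter Set Topology Metric



noncomputable def L2aux (z : ℂ) : ℂ := ∑' n : ℕ, z ^ (n + 1) / ((n : ℂ) + 1) ^ 2

def Uset : Set ℂ := {z : ℂ | ¬(z.im = 0 ∧ (z.re ≤ 0 ∨ 1 ≤ z.re))}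
def Dset : Set ℂ := {z : ℂ | ¬(z.im = 0 ∧ 1 ≤ z.re)}

lemma Dset_open : IsOpen Dset := by
  have : Dset = ((Complex.im ⁻¹' {0}) ∩ (Complex.re ⁻¹' Ici 1))ᶜ := by
    ext z; simp only [Dset, mem_setOf_eq, mem_compl_iff, mem_inter_iff, mem_preimage,
      mem_singleton_iff, mem_Ici]
  rw [this]
  exact (((isClosed_singleton.preimage Complex.continuous_im).inter
    (isClosed_Ici.preimage Complex.continuous_re))).isOpen_compl

lemma Uset_open : IsOpen Uset := by
  have : Uset = (((Complex.im ⁻¹' {0}) ∩ (Complex.re ⁻¹' Iic 0)) ∪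
      ((Complex.im ⁻¹' {0}) ∩ (Complex.re ⁻¹' Ici 1)))ᶜ := by
    ext z
    simp only [Uset, mem_setOf_eq, mem_compl_iff, mem_union, mem_inter_iff, mem_preimage,
      mem_singleton_iff, mem_Iic, mem_Ici]
    tauto
  rw [this]
  exact (IsClosed.union
    ((isClosed_singleton.preimage Complex.continuous_im).inter
      (isClosed_Iic.preimage Complex.continuous_re))
    ((isClosed_singleton.preimage Complex.continuous_im).inter
      (isClosed_Ici.preimage Complex.continuous_re))).isOpen_compl

lemma Uset_sub : Uset ⊆ Dset := fun z hz h => hz ⟨h.1, Or.inr h.2⟩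

lemma one_sub_mem {z : ℂ} (hz : z ∈ Uset) : 1 - z ∈ Uset := by
  simp only [Uset, mem_setOf_eq, sub_im, one_im, sub_re, one_re, zero_sub, neg_eq_zero] at *
  intro h
  refine hz ⟨h.1, ?_⟩
  rcases h.2 with h2 | h2
  · right; linarith
  · left; linarith

lemma mem_slit {z : ℂ} (hz : z ∈ Uset) : z ∈ Complex.slitPlane := by
  simp only [Uset, mem_setOf_eq] at hz
  rw [Complex.mem_slitPlane_iff]
  by_cases h : z.im = 0
  · left; push_neg at hz; rcases hz h with ⟨h1, h2⟩; linarith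
  · right; exact h

lemma ne_zero_of_mem {z : ℂ} (hz : z ∈ Uset) : z ≠ 0 := by
  rintro rfl; exact hz ⟨rfl, Or.inl le_rfl⟩

lemma starU : StarConvex ℝ ((1:ℂ)/2) Uset := by
  intro y hy a b ha hb hab
  simp only [Uset, mem_setOf_eq] at hy ⊢
  intro h
  have him : (a • ((1:ℂ)/2) + b • y).im = b * y.im := by
    simp [Complex.smul_im]
  have hre : (a • ((1:ℂ)/2) + b • y).re = a * (1/2) + b * y.re := by
    simp [Complex.smul_re]
  rw [him] at h
  rw [hre] at h
  by_cases hyim : y.im = 0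
  · push_neg at hy
    rcases hy hyim with ⟨h1, h2⟩
    rcases h.2 with h3 | h3 <;> nlinarith
  · have hb0 : b = 0 := by
      rcases mul_eq_zero.mp h.1 with h' | h'
      · exact h'
      · exact absurd h' hyim
    have ha1 : a = 1 := by linarith
    rw [hb0, ha1] at h
    rcases h.2 with h3 | h3 <;> norm_num at h3




lemma Upre : IsPreconnected Uset := by
  apply isPreconnected_of_forall ((1:ℂ)/2)
  intro y hy
  exact ⟨segment ℝ ((1:ℂ)/2) y, starU.segment_subset hy, left_mem_segment ℝ _ _,
    right_mem_segment ℝ _ _, (convex_segment _ _).isPreconnected⟩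


lemma summ_aux {z : ℂ} (hz : ‖z‖ < 1) :
    Summable (fun n : ℕ => z ^ (n + 1) / ((n : ℂ) + 1) ^ 2) := by
  apply Summable.of_norm_bounded (g := fun n => ‖z‖ ^ n)
    (summable_geometric_of_lt_one (norm_nonneg z) hz)
  intro n
  rw [norm_div, norm_pow]
  have h1 : (1:ℝ) ≤ ‖((n : ℂ) + 1) ^ 2‖ := by
    rw [norm_pow]
    apply one_le_pow₀
    have : ((n : ℂ) + 1) = ((n + 1 : ℕ) : ℂ) := by push_cast; ring
    rw [this, Complex.norm_natCast]
    exact_mod_cast Nat.succ_le_succ (Nat.zero_le n)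
  calc ‖z‖ ^ (n+1) / ‖((n : ℂ) + 1) ^ 2‖ ≤ ‖z‖ ^ (n+1) / 1 :=
        div_le_div_of_nonneg_left (by positivity) one_pos h1 |>.trans_eq (by rw [])
    _ = ‖z‖ ^ n * ‖z‖ := by rw [div_one, pow_succ]
    _ ≤ ‖z‖ ^ n * 1 := by
        apply mul_le_mul_of_nonneg_left hz.le (by positivity)
    _ = ‖z‖ ^ n := mul_one _

lemma hasDerivAt_L2aux {z : ℂ} (hz : ‖z‖ < 1) :
    HasDerivAt L2aux (∑' n : ℕ, z ^ n / ((n : ℂ) + 1)) z := by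
  have hball : z ∈ Metric.ball (0:ℂ) 1 := by simpa using hz
  apply hasDerivAt_of_tendstoLocallyUniformlyOn (isOpen_ball)
      (f := fun N w => ∑ n ∈ Finset.range N, w ^ (n+1) / ((n:ℂ)+1)^2)
      (f' := fun N w => ∑ n ∈ Finset.range N, w ^ n / ((n:ℂ)+1))
      (g := L2aux) (l := atTop) _ _ _ hball
  · rw [tendstoLocallyUniformlyOn_iff_forall_isCompact isOpen_ball]
    intro K hK hKc
    rcases K.eq_empty_or_nonempty with rfl | hne
    · simp [tendstoUniformlyOn_empty]
    obtain ⟨x0, hx0K, hmax⟩ := hKc.exists_isMaxOn hne continuous_norm.continuousOn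
    have hr : ‖x0‖ < 1 := by simpa using hK hx0K
    apply tendstoUniformlyOn_tsum_nat (u := fun n => ‖x0‖ ^ n)
      (summable_geometric_of_lt_one (norm_nonneg _) hr)
    intro n x hx
    rw [norm_div]
    have h1 : (1:ℝ) ≤ ‖(n : ℂ) + 1‖ := by
      have : ((n : ℂ) + 1) = ((n + 1 : ℕ) : ℂ) := by push_cast; ring
      rw [this, Complex.norm_natCast]
      exact_mod_cast Nat.succ_le_succ (Nat.zero_le n)
    calc ‖x ^ n‖ / ‖(n:ℂ)+1‖ ≤ ‖x ^ n‖ / 1 :=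
          div_le_div_of_nonneg_left (by positivity) one_pos h1
      _ = ‖x‖ ^ n := by rw [div_one, norm_pow]
      _ ≤ ‖x0‖ ^ n := pow_le_pow_left₀ (norm_nonneg _) (hmax hx) n
  · filter_upwards with N x hx
    apply HasDerivAt.fun_sum
    intro n _
    have h := (hasDerivAt_pow (n+1) x).div_const (((n:ℂ)+1)^2)
    convert h using 1
    · rfl
    have hne : ((n:ℂ)+1) ≠ 0 := Nat.cast_add_one_ne_zero n
    field_simp
    push_cast
    ring
  · intro x hx
    have hx' : ‖x‖ < 1 := by simpa using hx
    exact (summ_aux hx').hasSum.tendsto_sum_nat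




lemma tsum_eq_log {z : ℂ} (hz : ‖z‖ < 1) (h0 : z ≠ 0) :
    ∑' n : ℕ, z ^ n / ((n : ℂ) + 1) = -Complex.log (1 - z) / z := by
  have h := Complex.hasSum_taylorSeries_neg_log hz
  have h1 : HasSum (fun n : ℕ => z ^ (n+1) / ((n : ℂ) + 1)) (-Complex.log (1 - z)) := by
    have h2 := (hasSum_nat_add_iff' (f := fun n : ℕ => z ^ n / (n : ℂ)) 1).mpr h
    simp only [Finset.range_one, Finset.sum_singleton, Nat.cast_zero, div_zero, sub_zero] at h2
    convert h2 using 2 with n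
    · rfl
    push_cast
    ring
  have h3 := h1.div_const z
  have h4 : (fun n : ℕ => z ^ (n+1) / ((n : ℂ) + 1) / z) = fun n : ℕ => z ^ n / ((n : ℂ) + 1) := by
    funext n
    rw [div_right_comm, pow_succ, mul_div_cancel_right₀ _ h0]
  rw [h4] at h3
  exact h3.tsum_eq

lemma hasDerivAt_L2aux' {z : ℂ} (hz : ‖z‖ < 1) (h0 : z ≠ 0) :
    HasDerivAt L2aux (-Complex.log (1 - z) / z) z := by
  have := hasDerivAt_L2aux hz
  rwa [tsum_eq_log hz h0] at this

lemma contL2 : ContinuousOn L2aux (closedBall (0:ℂ) 1) := by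
  apply continuousOn_tsum (u := fun n : ℕ => 1 / ((n:ℝ)+1)^2)
  · intro n
    exact ((continuous_pow (n+1)).div_const _).continuousOn
  · have h := (summable_nat_add_iff 1).mpr (Real.summable_one_div_nat_pow.mpr one_lt_two)
    convert h using 2 with n
    · rfl
    push_cast
    norm_num
  · intro n x hx
    have hx1 : ‖x‖ ≤ 1 := by simpa using hx
    rw [norm_div, norm_pow, norm_pow]
    have : ‖(n:ℂ)+1‖ = (n:ℝ)+1 := by
      have : ((n : ℂ) + 1) = ((n + 1 : ℕ) : ℂ) := by push_cast; ring
      rw [this, Complex.norm_natCast]; push_cast; ring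
    rw [this]
    have hle : ‖x‖ ^ (n+1) ≤ 1 := by
      calc ‖x‖ ^ (n+1) ≤ 1 ^ (n+1) := pow_le_pow_left₀ (norm_nonneg x) hx1 (n+1)
        _ = 1 := one_pow _
    calc ‖x‖ ^ (n+1) / ((n:ℝ)+1)^2 ≤ 1 / ((n:ℝ)+1)^2 := by
          apply div_le_div_of_nonneg_right hle (by positivity) |>.trans_eq rfl
      _ = 1 / ((n:ℝ)+1)^2 := rfl
  
lemma L2aux_zero : L2aux 0 = 0 := by
  simp [L2aux]

lemma L2aux_one : L2aux 1 = ((Real.pi ^ 2 / 6 : ℝ) : ℂ) := by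
  have h := hasSum_zeta_two
  have h1 := (hasSum_nat_add_iff' (f := fun n : ℕ => (1:ℝ) / (n:ℝ) ^ 2) 1).mpr h
  simp only [Finset.range_one, Finset.sum_singleton, Nat.cast_zero] at h1
  norm_num at h1
  have h2 := h1.mapL Complex.ofRealCLM
  have h3 : HasSum (fun n : ℕ => (1:ℂ) ^ (n+1) / ((n : ℂ) + 1) ^ 2) ((Real.pi ^2/6 : ℝ):ℂ) := by
    convert h2 using 2 with n
    push_cast
    norm_num
    rfl
  exact h3.tsum_eq



lemma real_log_lim : Filter.Tendsto (fun x : ℝ => Real.log x * Real.log (1 - x))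
    (𝓝[>] (0:ℝ)) (𝓝 0) := by
  have t1 : Tendsto (fun x : ℝ => Real.log x * x) (𝓝[>] (0:ℝ)) (𝓝 0) := by
    have := tendsto_log_mul_rpow_nhdsGT_zero one_pos
    apply this.congr'
    filter_upwards [self_mem_nhdsWithin] with x hx
    rw [Real.rpow_one]
  have hd : HasDerivAt (fun x : ℝ => Real.log (1 - x)) (-1) 0 := by
    have hinner : HasDerivAt (fun x : ℝ => 1 - x) (-1) 0 := (hasDerivAt_id 0).const_sub 1
    have houter : HasDerivAt Real.log 1⁻¹ ((1:ℝ) - 0) := by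
      rw [sub_zero]
      exact Real.hasDerivAt_log one_ne_zero
    have := houter.comp 0 hinner
    norm_num at this
    exact this
  have t2 : Tendsto (fun x : ℝ => Real.log (1 - x) / x) (𝓝[>] (0:ℝ)) (𝓝 (-1)) := by
    have h := hasDerivAt_iff_tendsto_slope.mp hd
    have hmono : 𝓝[>] (0:ℝ) ≤ 𝓝[≠] (0:ℝ) :=
      nhdsWithin_mono 0 (fun x hx => ne_of_gt hx)
    apply (h.mono_left hmono).congr'
    filter_upwards [self_mem_nhdsWithin] with x hx
    simp [slope_def_field]
  have t := t1.mul t2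
  norm_num at t
  apply t.congr'
  filter_upwards [self_mem_nhdsWithin] with x hx
  have hx0 : x ≠ 0 := ne_of_gt hx
  field_simp




lemma half_mem_U : (1:ℂ)/2 ∈ Uset := by
  simp [Uset, Complex.div_im, Complex.div_re]
  norm_num

lemma ball_sub_U : Metric.ball ((1:ℂ)/2) (1/2) ⊆ Uset := by
  intro w hw
  simp only [mem_ball, Complex.dist_eq] at hw
  have h1 : |w.im| ≤ ‖w - 1/2‖ := by
    simpa using Complex.abs_im_le_norm (w - 1/2)
  have h2 : |w.re - 1/2| ≤ ‖w - 1/2‖ := by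
    simpa using Complex.abs_re_le_norm (w - 1/2)
  rintro ⟨him, hre⟩
  have h4 := abs_lt.mp (lt_of_le_of_lt h2 hw)
  rcases hre with h3 | h3
  · linarith [h4.1]
  · linarith [h4.2]

lemma ball_sub_disk : Metric.ball ((1:ℂ)/2) (1/2) ⊆ Metric.ball (0:ℂ) 1 := by
  intro w hw
  simp only [mem_ball, Complex.dist_eq] at hw ⊢
  calc ‖w - 0‖ = ‖(w - 1/2) + 1/2‖ := by ring_nf
    _ ≤ ‖w - 1/2‖ + ‖(1/2 : ℂ)‖ := norm_add_le _ _
    _ < 1/2 + 1/2 := by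
        apply add_lt_add_of_lt_of_le hw
        norm_num
    _ = 1 := by norm_num

lemma ball_ne_zero {w : ℂ} (hw : w ∈ Metric.ball ((1:ℂ)/2) (1/2)) : w ≠ 0 := by
  rintro rfl
  simp only [mem_ball, Complex.dist_eq, zero_sub] at hw
  rw [norm_neg] at hw
  rw [norm_div] at hw
  simp at hw

section Main
variable (Li2 : ℂ → ℂ)
    (hdiff : DifferentiableOn ℂ Li2 {z : ℂ | ¬(z.im = 0 ∧ 1 ≤ z.re)})
    (hser : ∀ z : ℂ, ‖z‖ < 1 → Li2 z = ∑' n : ℕ, z ^ (n + 1) / ((n : ℂ) + 1) ^ 2)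

include hdiff hser in
lemma deriv_Li2_eq : Set.EqOn (deriv Li2) (fun z => -Complex.log (1 - z) / z) Uset := by
  have hDan : AnalyticOnNhd ℂ Li2 Dset := hdiff.analyticOnNhd Dset_open
  have hf : AnalyticOnNhd ℂ (deriv Li2) Uset := (hDan.deriv).mono Uset_sub
  have hg : AnalyticOnNhd ℂ (fun z => -Complex.log (1 - z) / z) Uset := by
    apply DifferentiableOn.analyticOnNhd _ Uset_open
    intro w hw
    apply DifferentiableAt.differentiableWithinAt
    apply DifferentiableAt.div
    · apply DifferentiableAt.neg
      apply DifferentiableAt.clog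
      · exact (differentiableAt_const 1).sub differentiableAt_id
      · exact mem_slit (one_sub_mem hw)
    · exact differentiableAt_id
    · exact ne_zero_of_mem hw
  apply hf.eqOn_of_preconnected_of_eventuallyEq hg Upre half_mem_U
  have hmem : Metric.ball ((1:ℂ)/2) (1/2) ∈ 𝓝 ((1:ℂ)/2) :=
    Metric.ball_mem_nhds _ (by norm_num)
  apply eventually_of_mem hmem
  intro w hw
  have hw1 : ‖w‖ < 1 := by simpa [Complex.dist_eq] using ball_sub_disk hw
  have hw0 : w ≠ 0 := ball_ne_zero hw
  have heq : Li2 =ᶠ[𝓝 w] L2aux := by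
    apply eventually_of_mem ((Metric.isOpen_ball (x := (0:ℂ)) (ε := 1)).mem_nhds (by simpa using hw1))
    intro u hu
    exact hser u (by simpa using hu)
  rw [heq.deriv_eq]
  exact (hasDerivAt_L2aux' hw1 hw0).deriv

include hdiff hser in
lemma hasDerivAt_F : ∀ w ∈ Uset,
    HasDerivAt (fun w => Li2 w + Li2 (1 - w) + Complex.log w * Complex.log (1 - w)) 0 w := by
  intro w hw
  have hw1 : 1 - w ∈ Uset := one_sub_mem hw
  have hw0 : w ≠ 0 := ne_zero_of_mem hw
  have hw10 : 1 - w ≠ 0 := ne_zero_of_mem hw1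
  have hLi2' : ∀ u ∈ Uset, HasDerivAt Li2 (-Complex.log (1 - u) / u) u := by
    intro u hu
    have hd : DifferentiableAt ℂ Li2 u :=
      hdiff.differentiableAt (Dset_open.mem_nhds (Uset_sub hu))
    have := hd.hasDerivAt
    rwa [deriv_Li2_eq Li2 hdiff hser hu] at this
  have h1 : HasDerivAt Li2 (-Complex.log (1 - w) / w) w := hLi2' w hw
  have hinner : HasDerivAt (fun u : ℂ => 1 - u) (-1) w := (hasDerivAt_id w).const_sub 1
  have h2 : HasDerivAt (fun u => Li2 (1 - u)) (-Complex.log (1 - (1 - w)) / (1 - w) * (-1)) w :=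
    (hLi2' (1 - w) hw1).comp w hinner
  have hlog1 : HasDerivAt Complex.log w⁻¹ w := Complex.hasDerivAt_log (mem_slit hw)
  have hlog2 : HasDerivAt (fun u => Complex.log (1 - u)) ((1 - w)⁻¹ * (-1)) w :=
    (Complex.hasDerivAt_log (mem_slit hw1)).comp w hinner
  have h3 : HasDerivAt (fun u => Complex.log u * Complex.log (1 - u))
      (w⁻¹ * Complex.log (1 - w) + Complex.log w * ((1 - w)⁻¹ * (-1))) w :=
    hlog1.mul hlog2
  have h := (h1.add h2).add h3
  convert h using 1
  · rfl
  · rfl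
  · rfl
  rw [sub_sub_cancel]
  field_simp
  ring







include hdiff hser in
lemma F_eq_value : ∀ w ∈ Uset,
    Li2 w + Li2 (1 - w) + Complex.log w * Complex.log (1 - w) =
    Li2 (1/2) + Li2 (1 - 1/2) + Complex.log (1/2) * Complex.log (1 - 1/2) := by
  set F : ℂ → ℂ := fun w => Li2 w + Li2 (1 - w) + Complex.log w * Complex.log (1 - w) with hFdef
  have hder := hasDerivAt_F Li2 hdiff hser
  have hdiffU : DifferentiableOn ℂ F Uset := fun x hx =>
    (hder x hx).differentiableAt.differentiableWithinAt
  have hball : ∀ x ∈ Metric.ball ((1:ℂ)/2) (1/2), F x = F (1/2) := by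
    intro x hx
    apply Convex.is_const_of_fderivWithin_eq_zero (convex_ball _ _)
      (hdiffU.mono ball_sub_U) ?_ hx (Metric.mem_ball_self (by norm_num))
    intro y hy
    have h0 := (hder y (ball_sub_U hy)).hasFDerivAt
    rw [h0.hasFDerivWithinAt.fderivWithin (Metric.isOpen_ball.uniqueDiffWithinAt hy)]
    ext
    simp
  have hFan : AnalyticOnNhd ℂ F Uset := hdiffU.analyticOnNhd Uset_open
  have hcan : AnalyticOnNhd ℂ (fun _ : ℂ => F (1/2)) Uset := analyticOnNhd_const
  have heq := hFan.eqOn_of_preconnected_of_eventuallyEq hcan Upre half_mem_U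
    (eventually_of_mem (Metric.ball_mem_nhds _ (by norm_num)) hball)
  intro w hw
  exact heq hw

include hdiff hser in
lemma F_value : ∀ w ∈ Uset,
    Li2 w + Li2 (1 - w) + Complex.log w * Complex.log (1 - w) = (Real.pi : ℂ) ^ 2 / 6 := by
  have hconst := F_eq_value Li2 hdiff hser
  set c : ℂ := Li2 (1/2) + Li2 (1 - 1/2) + Complex.log (1/2) * Complex.log (1 - 1/2) with hc
  suffices hcv : c = (Real.pi : ℂ) ^ 2 / 6 by
    intro w hw; rw [hconst w hw, hcv]
  set xs : ℕ → ℝ := fun n => ((n:ℝ)+2)⁻¹ with hxs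
  have hxspos : ∀ n, 0 < xs n := fun n => by positivity
  have hxshalf : ∀ n, xs n ≤ 1/2 := by
    intro n
    rw [hxs]
    rw [inv_le_comm₀ (by positivity) (by norm_num)]
    norm_num
  have hxs0 : Tendsto xs atTop (𝓝 0) := by
    exact tendsto_inv_atTop_zero.comp
      (tendsto_atTop_add_const_right atTop 2 tendsto_natCast_atTop_atTop)
  set cs : ℕ → ℂ := fun n => ((xs n : ℝ) : ℂ) with hcs
  have hnormcs : ∀ n, ‖cs n‖ = xs n := by
    intro n
    rw [hcs]
    simp only [Complex.norm_real, Real.norm_eq_abs]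
    exact abs_of_pos (hxspos n)
  have hnormds : ∀ n, ‖1 - cs n‖ = 1 - xs n := by
    intro n
    have : (1:ℂ) - cs n = ((1 - xs n : ℝ) : ℂ) := by push_cast [hcs]; ring
    rw [this]
    simp only [Complex.norm_real, Real.norm_eq_abs]
    refine abs_of_nonneg (by linarith [hxshalf n])
  have hcsU : ∀ n, cs n ∈ Uset := by
    intro n
    show ((xs n : ℝ) : ℂ) ∈ Uset
    simp only [Uset, mem_setOf_eq, Complex.ofReal_im, Complex.ofReal_re]
    rintro ⟨-, h | h⟩
    · exact absurd h (not_le.mpr (hxspos n))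
    · linarith [hxshalf n]
  have hcs0 : Tendsto cs atTop (𝓝 (0:ℂ)) := by
    have := (Complex.continuous_ofReal.tendsto (0:ℝ)).comp hxs0
    rw [Complex.ofReal_zero] at this; exact this
  have hds1 : Tendsto (fun n => 1 - cs n) atTop (𝓝 (1:ℂ)) := by
    have := tendsto_const_nhds (x := (1:ℂ)) (f := atTop (α := ℕ)) |>.sub hcs0
    simpa using this
  -- limit 1
  have h1 : Tendsto (fun n => Li2 (cs n)) atTop (𝓝 0) := by
    have hmem : ∀ n, cs n ∈ closedBall (0:ℂ) 1 := by
      intro n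
      simp only [mem_closedBall, dist_zero_right, hnormcs]
      linarith [hxshalf n]
    have h1' : Tendsto (fun n => L2aux (cs n)) atTop (𝓝 (L2aux 0)) :=
      ((contL2 0 (by simp)).tendsto).comp
        (tendsto_nhdsWithin_of_tendsto_nhds_of_eventually_within _ hcs0
          (Eventually.of_forall hmem))
    rw [L2aux_zero] at h1'
    apply h1'.congr
    intro n
    have : ‖cs n‖ < 1 := by rw [hnormcs]; linarith [hxshalf n]
    exact (hser _ this).symm
  -- limit 2
  have h2 : Tendsto (fun n => Li2 (1 - cs n)) atTop (𝓝 ((Real.pi ^ 2 / 6 : ℝ) : ℂ)) := by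
    have hmem : ∀ n, (1 - cs n) ∈ closedBall (0:ℂ) 1 := by
      intro n
      simp only [mem_closedBall, dist_zero_right, hnormds]
      linarith [hxspos n]
    have h2' : Tendsto (fun n => L2aux (1 - cs n)) atTop (𝓝 (L2aux 1)) :=
      ((contL2 1 (by simp)).tendsto).comp
        (tendsto_nhdsWithin_of_tendsto_nhds_of_eventually_within _ hds1
          (Eventually.of_forall hmem))
    rw [L2aux_one] at h2'
    apply h2'.congr
    intro n
    have : ‖1 - cs n‖ < 1 := by rw [hnormds]; linarith [hxspos n]
    exact (hser _ this).symm
  -- limit 3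
  have h3 : Tendsto (fun n => Complex.log (cs n) * Complex.log (1 - cs n)) atTop (𝓝 0) := by
    have hxsIoi : Tendsto xs atTop (𝓝[>] (0:ℝ)) :=
      tendsto_nhdsWithin_of_tendsto_nhds_of_eventually_within _ hxs0
        (Eventually.of_forall (fun n => hxspos n))
    have hre := real_log_lim.comp hxsIoi
    have := (Complex.continuous_ofReal.tendsto (0:ℝ)).comp hre
    apply this.congr
    intro n
    have hxcast : (1:ℂ) - cs n = ((1 - xs n : ℝ) : ℂ) := by push_cast [hcs]; ring
    simp only [Function.comp_apply, Complex.ofReal_mul]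
    rw [Complex.ofReal_log (hxspos n).le,
      Complex.ofReal_log (show (0:ℝ) ≤ 1 - xs n from by linarith [hxshalf n]), ← hxcast]
  have htot := (h1.add h2).add h3
  have htot' : Tendsto (fun _ : ℕ => c) atTop (𝓝 (0 + ((Real.pi ^2/6:ℝ):ℂ) + 0)) := by
    apply htot.congr
    intro n
    exact hconst _ (hcsU n)
  have := tendsto_nhds_unique htot' tendsto_const_nhds
  rw [← this]
  push_cast
  ring


end Main

/-- Euler's reflection identity: for `Li₂` holomorphic on the cut plane and given by
its series on the disk, `Li₂(z) + Li₂(1-z) + log(z)log(1-z)` has zero derivative on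
`ℂ \ ((-∞,0] ∪ [1,∞))` and equals `π²/6` there. -/
theorem stmt18 (Li2 : ℂ → ℂ)
    (hdiff : DifferentiableOn ℂ Li2 {z : ℂ | ¬(z.im = 0 ∧ 1 ≤ z.re)})
    (hser : ∀ z : ℂ, ‖z‖ < 1 → Li2 z = ∑' n : ℕ, z ^ (n + 1) / ((n : ℂ) + 1) ^ 2)
    (z : ℂ) (hz : ¬(z.im = 0 ∧ (z.re ≤ 0 ∨ 1 ≤ z.re))) :
    deriv (fun w => Li2 w + Li2 (1 - w) + Complex.log w * Complex.log (1 - w)) z = 0 ∧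
    Li2 z + Li2 (1 - z) + Complex.log z * Complex.log (1 - z) = (Real.pi : ℂ) ^ 2 / 6 := by
  have hzU : z ∈ Uset := hz
  exact ⟨(hasDerivAt_F Li2 hdiff hser z hzU).deriv, F_value Li2 hdiff hser z hzU⟩
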